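/- arXiv:1706.01614 — 2 statements merged into one kernel-verified Lean document; each statement's English description precedes it below -/
import Mathlib

section
/- (Closed form of the dual function.) Assume μ_i((−∞,0]) = 0 for all i ∈ I. Then for every λ ∈ ℝ^K, L*(λ) = Σ_{k∈K} λ_k · m_k + Σ_{i ∈ I, K_i ≠ ∅} s_i · max(0, max_{k∈K_i} ∫ max((1 − λ_k)·r_ik − t, 0) dμ_i(t)). -/
open MeasureTheory Finset

variable {I K : Type*}

/-- `fwin μ i a b = ∫ (a − t)·1_{(−∞,b]}(t) dμ_i(t)`: expected utility of bidding `b`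
with valuation `a` in a second-price auction against highest competing bid with law `μ i`. -/
noncomputable def fwin (μ : I → Measure ℝ) (i : I) (a b : ℝ) : ℝ :=
  ∫ t in Set.Iic b, (a - t) ∂(μ i)

/-- `rho μ i b = μ_i((−∞,b])`: the probability of winning the auction with bid `b`. -/
noncomputable def rho (μ : I → Measure ℝ) (i : I) (b : ℝ) : ℝ :=
  ((μ i) (Set.Iic b)).toReal

variable [Fintype I] [Fintype K] [DecidableEq I] [DecidableEq K]

/-- The allocation polytope `S`. -/
def alloc (E : Finset (I × K)) : Set ((I × K) → ℝ) :=
  {x | (∀ e ∈ E, 0 ≤ x e) ∧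
    ∀ i : I, ∑ e ∈ E.filter (fun e => e.1 = i), x e ≤ 1}

/-- The profit objective `π(x,b)`. -/
noncomputable def profit (E : Finset (I × K)) (μ : I → Measure ℝ) (s : I → ℝ)
    (r : I × K → ℝ) (x b : (I × K) → ℝ) : ℝ :=
  ∑ e ∈ E, s e.1 * x e * fwin μ e.1 (r e) (b e)

/-- Expected spend of campaign `k`: `Σ_{i ∈ I_k} r_ik · s_i · x_ik · ρ_i(b_ik)`. -/
noncomputable def spend (E : Finset (I × K)) (μ : I → Measure ℝ) (s : I → ℝ)
    (r : I × K → ℝ) (x b : (I × K) → ℝ) (k : K) : ℝ :=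
  ∑ e ∈ E.filter (fun e => e.2 = k), r e * s e.1 * x e * rho μ e.1 (b e)

/-- The Lagrangian `L(x,b,λ)`. -/
noncomputable def Lag (E : Finset (I × K)) (μ : I → Measure ℝ) (s : I → ℝ)
    (r : I × K → ℝ) (m : K → ℝ) (x b : (I × K) → ℝ) (lam : K → ℝ) : ℝ :=
  profit E μ s r x b + ∑ k : K, lam k * (m k - spend E μ s r x b k)

/-- The dual function `L*(λ) = sup {L(x,b,λ) : x ∈ S, b ≥ 0}`. -/
noncomputable def Lstar (E : Finset (I × K)) (μ : I → Measure ℝ) (s : I → ℝ)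
    (r : I × K → ℝ) (m : K → ℝ) (lam : K → ℝ) : ℝ :=
  sSup {v : ℝ | ∃ x b : (I × K) → ℝ,
    x ∈ alloc E ∧ (∀ e ∈ E, 0 ≤ b e) ∧ v = Lag E μ s r m x b lam}

lemma fwin_le (μ : I → Measure ℝ) (i : I) [IsProbabilityMeasure (μ i)]
    (hμ : Integrable (fun t => t) (μ i)) (a b : ℝ) :
    fwin μ i a b ≤ ∫ t, max (a - t) 0 ∂(μ i) := by
  rw [fwin, ← integral_indicator measurableSet_Iic]
  apply integral_mono
  · exact ((integrable_const a).sub hμ).indicator measurableSet_Iic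
  · exact ((integrable_const a).sub hμ).pos_part
  · intro t
    by_cases h : t ∈ Set.Iic b
    · simp only [Set.indicator_of_mem h]; exact le_max_left _ _
    · simp only [Set.indicator_of_notMem h]; exact le_max_right _ _

lemma fwin_eq (μ : I → Measure ℝ) (i : I) [IsProbabilityMeasure (μ i)]
    (hμ0 : μ i (Set.Iic 0) = 0) (a : ℝ) :
    fwin μ i a (max a 0) = ∫ t, max (a - t) 0 ∂(μ i) := by
  rw [fwin, ← integral_indicator measurableSet_Iic]
  apply integral_congr_ae
  have h : ∀ᵐ t ∂(μ i), t ∉ Set.Iic 0 := (measure_eq_zero_iff_ae_notMem).mp hμ0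
  filter_upwards [h] with t ht
  simp only [Set.mem_Iic, not_le] at ht
  by_cases hab : t ≤ max a 0
  · have ha : max a 0 = a := by
      rcases le_or_gt a 0 with h1 | h1
      · exfalso; rw [max_eq_right h1] at hab; linarith
      · exact max_eq_left h1.le
    rw [Set.indicator_of_mem (by exact hab)]
    rw [ha] at hab
    rw [max_eq_left (by linarith)]
  · rw [Set.indicator_of_notMem (by simpa using hab)]
    have : a < t := lt_of_le_of_lt (le_max_left a 0) (not_le.mp hab)
    rw [max_eq_right (by linarith)]

lemma fwin_shift (μ : I → Measure ℝ) (i : I) [IsProbabilityMeasure (μ i)]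
    (hμ : Integrable (fun t => t) (μ i)) (a c b : ℝ) :
    fwin μ i ((1 - c) * a) b = fwin μ i a b - c * a * rho μ i b := by
  have h1 : Integrable (fun t => a - t) ((μ i).restrict (Set.Iic b)) :=
    ((integrable_const a).sub hμ).restrict
  have h2 : Integrable (fun _ : ℝ => c * a) ((μ i).restrict (Set.Iic b)) :=
    integrable_const _
  have : fwin μ i ((1 - c) * a) b = ∫ t in Set.Iic b, ((a - t) - c * a) ∂(μ i) := by
    rw [fwin]; congr 1 with t; ring
  rw [this, integral_sub h1 h2, setIntegral_const, smul_eq_mul, fwin, rho, measureReal_def]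
  ring

lemma Lag_rewrite (E : Finset (I × K)) (μ : I → Measure ℝ)
    [∀ i, IsProbabilityMeasure (μ i)] (hμ : ∀ i, Integrable (fun t => t) (μ i))
    (s : I → ℝ) (r : I × K → ℝ) (m : K → ℝ) (x b : (I × K) → ℝ) (lam : K → ℝ) :
    Lag E μ s r m x b lam = (∑ k : K, lam k * m k) +
      ∑ e ∈ E, s e.1 * x e * fwin μ e.1 ((1 - lam e.2) * r e) (b e) := by
  have hsp : ∑ k : K, lam k * spend E μ s r x b k
      = ∑ e ∈ E, lam e.2 * (r e * s e.1 * x e * rho μ e.1 (b e)) := by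
    rw [← Finset.sum_fiberwise E (fun e => e.2)
      (fun e => lam e.2 * (r e * s e.1 * x e * rho μ e.1 (b e)))]
    refine Finset.sum_congr rfl fun k _ => ?_
    rw [spend, Finset.mul_sum]
    refine Finset.sum_congr rfl fun e he => ?_
    rw [(Finset.mem_filter.mp he).2]
  have hterm : ∀ e ∈ E, s e.1 * x e * fwin μ e.1 ((1 - lam e.2) * r e) (b e)
      = s e.1 * x e * fwin μ e.1 (r e) (b e)
        - lam e.2 * (r e * s e.1 * x e * rho μ e.1 (b e)) := by
    intro e _
    rw [fwin_shift μ e.1 (hμ e.1)]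
    ring
  rw [Finset.sum_congr rfl hterm, Finset.sum_sub_distrib, ← hsp, Lag, profit]
  rw [show ∑ k : K, lam k * (m k - spend E μ s r x b k)
    = ∑ k : K, lam k * m k - ∑ k : K, lam k * spend E μ s r x b k by
      rw [← Finset.sum_sub_distrib]; exact Finset.sum_congr rfl fun k _ => by ring]
  ring

/-- Closed form of the dual function: if the highest competing bid is strictly positive
almost surely, then for every `λ ∈ ℝ^K`,
`L*(λ) = Σ_k λ_k m_k + Σ_i s_i · max(0, max_{k ∈ K_i} ∫ max((1−λ_k) r_ik − t, 0) dμ_i(t))`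
(the term for `i` being `0` when `K_i = ∅`). -/
theorem stmt_8 (E : Finset (I × K)) (μ : I → Measure ℝ)
    [∀ i, IsProbabilityMeasure (μ i)]
    (hμ : ∀ i, Integrable (fun t => t) (μ i))
    (hμ0 : ∀ i, μ i (Set.Iic 0) = 0)
    (s : I → ℝ) (hs : ∀ i, 0 ≤ s i)
    (r : I × K → ℝ) (hr : ∀ e ∈ E, 0 ≤ r e)
    (m : K → ℝ) (lam : K → ℝ) :
    Lstar E μ s r m lam =
      (∑ k : K, lam k * m k) +
      ∑ i : I, s i *
        (insert (0 : ℝ) ((E.filter (fun e => e.1 = i)).image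
          (fun e => ∫ t, max ((1 - lam e.2) * r e - t) 0 ∂(μ i)))).max'
          (Finset.insert_nonempty _ _) := by
  classical
  set g : (I × K) → ℝ := fun e => ∫ t, max ((1 - lam e.2) * r e - t) 0 ∂(μ e.1) with hgdef
  have himg : ∀ i : I, (E.filter (fun e => e.1 = i)).image
      (fun e => ∫ t, max ((1 - lam e.2) * r e - t) 0 ∂(μ i))
      = (E.filter (fun e => e.1 = i)).image g := by
    intro i
    refine Finset.image_congr fun e he => ?_
    have h1 : e.1 = i := (Finset.mem_filter.mp (Finset.mem_coe.mp he)).2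
    simp only [hgdef, h1]
  set M : I → ℝ := fun i =>
    (insert (0 : ℝ) ((E.filter (fun e => e.1 = i)).image g)).max'
      (Finset.insert_nonempty _ _) with hMdef
  have hRHS : ∀ i : I,
      (insert (0 : ℝ) ((E.filter (fun e => e.1 = i)).image
        (fun e => ∫ t, max ((1 - lam e.2) * r e - t) 0 ∂(μ i)))).max'
        (Finset.insert_nonempty _ _) = M i := by
    intro i; simp only [himg i, hMdef]
  simp only [hRHS]
  -- basic facts
  have hg0 : ∀ e : I × K, 0 ≤ g e := fun e =>
    integral_nonneg fun t => le_max_right _ _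
  have hM0 : ∀ i, 0 ≤ M i := fun i =>
    Finset.le_max' _ 0 (Finset.mem_insert_self _ _)
  have hgM : ∀ e ∈ E, g e ≤ M e.1 := by
    intro e he
    simp only [hMdef]
    refine Finset.le_max' _ _ ?_
    exact Finset.mem_insert_of_mem
      (Finset.mem_image_of_mem g (Finset.mem_filter.mpr ⟨he, rfl⟩))
  -- upper bound
  have hub : ∀ x ∈ alloc E, ∀ b : (I × K) → ℝ,
      ∑ e ∈ E, s e.1 * x e * fwin μ e.1 ((1 - lam e.2) * r e) (b e)
        ≤ ∑ i : I, s i * M i := by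
    intro x hx b
    calc ∑ e ∈ E, s e.1 * x e * fwin μ e.1 ((1 - lam e.2) * r e) (b e)
        ≤ ∑ e ∈ E, s e.1 * x e * g e := by
          refine Finset.sum_le_sum fun e he => ?_
          exact mul_le_mul_of_nonneg_left (fwin_le μ e.1 (hμ e.1) _ _)
            (mul_nonneg (hs e.1) (hx.1 e he))
      _ = ∑ i : I, ∑ e ∈ E.filter (fun e => e.1 = i), s e.1 * x e * g e :=
          (Finset.sum_fiberwise E (fun e => e.1) _).symm
      _ ≤ ∑ i : I, s i * M i := by
          refine Finset.sum_le_sum fun i _ => ?_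
          calc ∑ e ∈ E.filter (fun e => e.1 = i), s e.1 * x e * g e
              ≤ ∑ e ∈ E.filter (fun e => e.1 = i), (s i * M i) * x e := by
                refine Finset.sum_le_sum fun e he => ?_
                obtain ⟨heE, hei⟩ := Finset.mem_filter.mp he
                have h1 : s e.1 * x e * g e ≤ s e.1 * x e * M e.1 :=
                  mul_le_mul_of_nonneg_left (hgM e heE)
                    (mul_nonneg (hs e.1) (hx.1 e heE))
                rw [← hei]
                exact h1.trans_eq (by ring)
            _ = (s i * M i) * ∑ e ∈ E.filter (fun e => e.1 = i), x e :=
                (Finset.mul_sum _ _ _).symm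
            _ ≤ (s i * M i) * 1 :=
                mul_le_mul_of_nonneg_left (hx.2 i) (mul_nonneg (hs i) (hM0 i))
            _ = s i * M i := mul_one _
  rcases Finset.eq_empty_or_nonempty E with hE | hE
  · subst hE
    have hM : ∀ i : I, M i = 0 := by
      intro i; rw [hMdef]; simp
    have hset : {v : ℝ | ∃ x b : (I × K) → ℝ,
        x ∈ alloc (∅ : Finset (I × K)) ∧ (∀ e ∈ (∅ : Finset (I × K)), 0 ≤ b e) ∧
        v = Lag ∅ μ s r m x b lam} = {∑ k : K, lam k * m k} := by
      ext v
      constructor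
      · rintro ⟨x, b, hx, hb, rfl⟩
        simp [Lag_rewrite (∅ : Finset (I × K)) μ hμ s r m x b lam]
      · rintro rfl
        refine ⟨fun _ => 0, fun _ => 0, ⟨fun e he => le_refl _, fun i => by simp⟩,
          fun e he => le_refl _, ?_⟩
        simp [Lag_rewrite (∅ : Finset (I × K)) μ hμ s r m _ _ lam]
    rw [Lstar, hset, csSup_singleton]
    simp [hM]
  · -- attainment
    obtain ⟨e₀, he₀⟩ := hE
    set pick : I → I × K := fun i =>
      if h : (E.filter (fun e => e.1 = i)).Nonempty then
        (Finset.mem_image.mp (Finset.max'_mem _ (h.image g))).choose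
      else e₀ with hpickdef
    have hpick : ∀ i : I, ∀ h : (E.filter (fun e => e.1 = i)).Nonempty,
        pick i ∈ E.filter (fun e => e.1 = i) ∧
        g (pick i) = ((E.filter (fun e => e.1 = i)).image g).max' (h.image g) := by
      intro i h
      rw [hpickdef]; simp only [dif_pos h]
      exact (Finset.mem_image.mp (Finset.max'_mem _ (h.image g))).choose_spec
    have hMrow : ∀ i : I, ∀ h : (E.filter (fun e => e.1 = i)).Nonempty,
        M i = g (pick i) := by
      intro i h
      have h2 := (hpick i h).2
      have h3 : M i = max (((E.filter (fun e => e.1 = i)).image g).max' (h.image g)) 0 := by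
        rw [hMdef]
        exact (Finset.max'_insert _ _ (h.image g)).trans (max_comm _ _)
      rw [h3, ← h2, max_eq_left (hg0 _)]
    have hMrow0 : ∀ i : I, ¬(E.filter (fun e => e.1 = i)).Nonempty → M i = 0 := by
      intro i h
      rw [Finset.not_nonempty_iff_eq_empty] at h
      rw [hMdef]; simp [h]
    set x₀ : (I × K) → ℝ := fun e =>
      if (E.filter (fun e' => e'.1 = e.1)).Nonempty ∧ e = pick e.1 then 1 else 0
      with hx₀def
    set b₀ : (I × K) → ℝ := fun e => max ((1 - lam e.2) * r e) 0 with hb₀def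
    have hx₀row : ∀ i : I, ∀ e ∈ E.filter (fun e => e.1 = i),
        x₀ e = if (E.filter (fun e' => e'.1 = i)).Nonempty ∧ e = pick i then 1 else 0 := by
      intro i e he
      have hei : e.1 = i := (Finset.mem_filter.mp he).2
      rw [hx₀def]; simp only [hei]
    have hx₀alloc : x₀ ∈ alloc E := by
      constructor
      · intro e _
        simp only [hx₀def]
        split <;> norm_num
      · intro i
        by_cases h : (E.filter (fun e => e.1 = i)).Nonempty
        · have : ∀ e ∈ E.filter (fun e => e.1 = i),
              x₀ e = if e = pick i then 1 else 0 := by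
            intro e he
            rw [hx₀row i e he]
            simp [h]
          rw [Finset.sum_congr rfl this, Finset.sum_ite_eq' (E.filter (fun e => e.1 = i))
            (pick i) (fun _ => (1:ℝ))]
          split <;> norm_num
        · rw [Finset.not_nonempty_iff_eq_empty] at h
          rw [h]; simp
    have hb₀ : ∀ e ∈ E, 0 ≤ b₀ e := fun e _ => le_max_right _ _
    have hval : Lag E μ s r m x₀ b₀ lam
        = (∑ k : K, lam k * m k) + ∑ i : I, s i * M i := by
      rw [Lag_rewrite E μ hμ s r m x₀ b₀ lam]
      congr 1
      rw [← Finset.sum_fiberwise E (fun e => e.1)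
        (fun e => s e.1 * x₀ e * fwin μ e.1 ((1 - lam e.2) * r e) (b₀ e))]
      refine Finset.sum_congr rfl fun i _ => ?_
      by_cases h : (E.filter (fun e => e.1 = i)).Nonempty
      · have hterm : ∀ e ∈ E.filter (fun e => e.1 = i),
            s e.1 * x₀ e * fwin μ e.1 ((1 - lam e.2) * r e) (b₀ e)
            = if e = pick i then s i * M i else 0 := by
          intro e he
          rw [hx₀row i e he]
          simp only [h, true_and]
          by_cases hep : e = pick i
          · have hei : e.1 = i := (Finset.mem_filter.mp he).2
            rw [if_pos hep, if_pos hep, mul_one]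
            have hfw : fwin μ e.1 ((1 - lam e.2) * r e) (b₀ e) = g e := by
              simp only [hb₀def, hgdef]
              exact fwin_eq μ e.1 (hμ0 e.1) _
            rw [hfw, hei, show g e = M i from by rw [hMrow i h, ← hep]]
          · rw [if_neg hep, if_neg hep, mul_zero, zero_mul]
        rw [Finset.sum_congr rfl hterm, Finset.sum_ite_eq' (E.filter (fun e => e.1 = i))
          (pick i) (fun _ => s i * M i)]
        rw [if_pos (hpick i h).1]
      · rw [Finset.not_nonempty_iff_eq_empty] at h
        rw [h, Finset.sum_empty, hMrow0 i (by rw [h]; simp), mul_zero]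
    have hgreat : IsGreatest {v : ℝ | ∃ x b : (I × K) → ℝ,
        x ∈ alloc E ∧ (∀ e ∈ E, 0 ≤ b e) ∧ v = Lag E μ s r m x b lam}
        ((∑ k : K, lam k * m k) + ∑ i : I, s i * M i) := by
      constructor
      · exact ⟨x₀, b₀, hx₀alloc, hb₀, hval.symm⟩
      · rintro v ⟨x, b, hx, hb, rfl⟩
        rw [Lag_rewrite E μ hμ s r m x b lam]
        exact add_le_add_right (hub x hx b) _
    exact hgreat.csSup_eq
end

section
/- (Theorem 1(ii): Procedure 1 computes a valid subgradient of the dual function.) Assume μ_i((−∞,0]) = 0 for all i ∈ I. Let λ ∈ ℝ^K satisfy 0 ≤ λ_k ≤ 1 for all k ∈ K. Define b*(λ)_ik := (1 − λ_k)·r_ik, π(λ)_ik := s_i · f_i((1 − λ_k)·r_ik, (1 − λ_k)·r_ik) for (i,k) ∈ E, let x*(λ) be any maximizer of x ↦ Σ_{(i,k)∈E} π(λ)_ik · x_ik over S, and define g(λ) ∈ ℝ^K by g(λ)_k := m_k − Σ_{i∈I_k} r_ik · s_i · x*(λ)_ik · ρ_i(b*(λ)_ik). Then for every λ' ∈ ℝ^K,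 L*(λ') ≥ L*(λ) + Σ_{k∈K} g(λ)_k · (λ'_k − λ_k); i.e., g(λ) is a subgradient of L* at λ. -/
open MeasureTheory Finset

variable {I K : Type*}

variable [Fintype I] [Fintype K] [DecidableEq I] [DecidableEq K]

section Aux

variable {I K : Type*}

private lemma fwin_repr (μ : I → Measure ℝ) [∀ i, IsProbabilityMeasure (μ i)]
    (hμ : ∀ i, Integrable (fun t => t) (μ i)) (i : I) (a b : ℝ) :
    fwin μ i a b = a * rho μ i b - ∫ t in Set.Iic b, t ∂(μ i) := by
  unfold fwin rho
  rw [integral_sub (integrable_const a).integrableOn (hμ i).integrableOn,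
    setIntegral_const, smul_eq_mul, measureReal_def]
  ring

private lemma fwin_le_diag (μ : I → Measure ℝ) [∀ i, IsProbabilityMeasure (μ i)]
    (hμ : ∀ i, Integrable (fun t => t) (μ i)) (i : I) (a b : ℝ) :
    fwin μ i a b ≤ fwin μ i a a := by
  have hint : Integrable (fun t => a - t) (μ i) := (integrable_const a).sub (hμ i)
  unfold fwin
  rcases le_total b a with h | h
  · have hsplit : (∫ t in Set.Iic a, (a - t) ∂(μ i))
        = (∫ t in Set.Iic b, (a - t) ∂(μ i)) + ∫ t in Set.Ioc b a, (a - t) ∂(μ i) := by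
      rw [← setIntegral_union (Set.Iic_disjoint_Ioc le_rfl) measurableSet_Ioc
        hint.integrableOn hint.integrableOn, Set.Iic_union_Ioc_eq_Iic h]
    have : 0 ≤ ∫ t in Set.Ioc b a, (a - t) ∂(μ i) :=
      setIntegral_nonneg measurableSet_Ioc (fun t ht => by linarith [ht.2])
    linarith
  · have hsplit : (∫ t in Set.Iic b, (a - t) ∂(μ i))
        = (∫ t in Set.Iic a, (a - t) ∂(μ i)) + ∫ t in Set.Ioc a b, (a - t) ∂(μ i) := by
      rw [← setIntegral_union (Set.Iic_disjoint_Ioc le_rfl) measurableSet_Ioc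
        hint.integrableOn hint.integrableOn, Set.Iic_union_Ioc_eq_Iic h]
    have : (∫ t in Set.Ioc a b, (a - t) ∂(μ i)) ≤ 0 :=
      setIntegral_nonpos measurableSet_Ioc (fun t ht => by linarith [ht.1])
    linarith

private lemma rho_nonneg (μ : I → Measure ℝ) (i : I) (b : ℝ) : 0 ≤ rho μ i b :=
  ENNReal.toReal_nonneg

private lemma rho_le_one (μ : I → Measure ℝ) [∀ i, IsProbabilityMeasure (μ i)]
    (i : I) (b : ℝ) : rho μ i b ≤ 1 := by
  unfold rho
  rw [show (1:ℝ) = (1:ENNReal).toReal by simp]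
  exact ENNReal.toReal_mono ENNReal.one_ne_top prob_le_one

private lemma fwin_le_mul (μ : I → Measure ℝ) [∀ i, IsProbabilityMeasure (μ i)]
    (hμ : ∀ i, Integrable (fun t => t) (μ i)) (hμ0 : ∀ i, μ i (Set.Iic 0) = 0)
    (i : I) (a b : ℝ) : fwin μ i a b ≤ a * rho μ i b := by
  rw [fwin_repr μ hμ]
  have hae : ∀ᵐ t ∂(μ i), 0 ≤ t := by
    rw [ae_iff]
    refine measure_mono_null (fun t ht => ?_) (hμ0 i)
    simp only [Set.mem_setOf_eq, not_le] at ht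
    exact Set.mem_Iic.mpr ht.le
  have h0 : 0 ≤ ∫ t in Set.Iic b, t ∂(μ i) :=
    integral_nonneg_of_ae (ae_restrict_of_ae hae)
  linarith

private lemma edge_eq (μ : I → Measure ℝ) [∀ i, IsProbabilityMeasure (μ i)]
    (hμ : ∀ i, Integrable (fun t => t) (μ i)) (i : I) (lam0 a b : ℝ) :
    fwin μ i a b - lam0 * (a * rho μ i b) = fwin μ i ((1 - lam0) * a) b := by
  rw [fwin_repr μ hμ, fwin_repr μ hμ]
  ring

variable [Fintype I] [Fintype K] [DecidableEq I] [DecidableEq K]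

private lemma Lag_eq (E : Finset (I × K)) (μ : I → Measure ℝ) (s : I → ℝ)
    (r : I × K → ℝ) (m : K → ℝ) (x b : (I × K) → ℝ) (lam0 : K → ℝ) :
    Lag E μ s r m x b lam0 =
      (∑ e ∈ E, (s e.1 * x e * fwin μ e.1 (r e) (b e)
        - lam0 e.2 * (r e * s e.1 * x e * rho μ e.1 (b e))))
      + ∑ k : K, lam0 k * m k := by
  unfold Lag profit spend
  rw [Finset.sum_sub_distrib]
  have key : ∑ k : K, lam0 k *
        (m k - ∑ e ∈ E.filter (fun e => e.2 = k), r e * s e.1 * x e * rho μ e.1 (b e))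
      = (∑ k : K, lam0 k * m k)
        - ∑ k : K, ∑ e ∈ E.filter (fun e => e.2 = k),
            lam0 e.2 * (r e * s e.1 * x e * rho μ e.1 (b e)) := by
    rw [← Finset.sum_sub_distrib]
    refine Finset.sum_congr rfl fun k _ => ?_
    rw [mul_sub, Finset.mul_sum]
    congr 1
    refine Finset.sum_congr rfl fun e he => ?_
    rw [(Finset.mem_filter.mp he).2]
  rw [key, Finset.sum_fiberwise E (fun e => e.2)
    (fun e => lam0 e.2 * (r e * s e.1 * x e * rho μ e.1 (b e)))]
  ring

private lemma x_le_one (E : Finset (I × K)) (x : (I × K) → ℝ) (hx : x ∈ alloc E)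
    {e : I × K} (he : e ∈ E) : x e ≤ 1 := by
  refine le_trans ?_ (hx.2 e.1)
  exact Finset.single_le_sum (fun f hf => hx.1 f (Finset.mem_filter.mp hf).1)
    (Finset.mem_filter.mpr ⟨he, rfl⟩)

private lemma lag_bdd (E : Finset (I × K)) (μ : I → Measure ℝ)
    [∀ i, IsProbabilityMeasure (μ i)]
    (hμ : ∀ i, Integrable (fun t => t) (μ i))
    (hμ0 : ∀ i, μ i (Set.Iic 0) = 0)
    (s : I → ℝ) (hs : ∀ i, 0 ≤ s i)
    (r : I × K → ℝ) (hr : ∀ e ∈ E, 0 ≤ r e) (m : K → ℝ) (lam' : K → ℝ) :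
    BddAbove {v : ℝ | ∃ x b : (I × K) → ℝ,
      x ∈ alloc E ∧ (∀ e ∈ E, 0 ≤ b e) ∧ v = Lag E μ s r m x b lam'} := by
  refine ⟨(∑ e ∈ E, s e.1 * r e)
      + ∑ k : K, |lam' k| * (|m k| + ∑ e ∈ E, r e * s e.1), ?_⟩
  rintro v ⟨x, b, hx, hb, rfl⟩
  unfold Lag profit
  have hterm : ∀ e ∈ E, s e.1 * x e * fwin μ e.1 (r e) (b e) ≤ s e.1 * r e := by
    intro e he
    have hf : fwin μ e.1 (r e) (b e) ≤ r e * rho μ e.1 (b e) := fwin_le_mul μ hμ hμ0 _ _ _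
    have hρ0 := rho_nonneg μ e.1 (b e)
    have hρ1 := rho_le_one μ e.1 (b e)
    have hx0 := hx.1 e he
    have hx1 := x_le_one E x hx he
    have hre := hr e he
    have hse := hs e.1
    nlinarith [mul_le_mul_of_nonneg_left hf (mul_nonneg hse hx0),
      mul_le_mul_of_nonneg_left hρ1 (mul_nonneg (mul_nonneg hse hx0) hre),
      mul_le_mul_of_nonneg_right hx1 (mul_nonneg hse hre)]
  have hspend0 : ∀ k, 0 ≤ spend E μ s r x b k := by
    intro k
    refine Finset.sum_nonneg fun e he => ?_
    have heE := (Finset.mem_filter.mp he).1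
    exact mul_nonneg (mul_nonneg (mul_nonneg (hr e heE) (hs e.1)) (hx.1 e heE))
      (rho_nonneg μ e.1 (b e))
  have hspend1 : ∀ k, spend E μ s r x b k ≤ ∑ e ∈ E, r e * s e.1 := by
    intro k
    refine le_trans (Finset.sum_le_sum_of_subset_of_nonneg (Finset.filter_subset _ _)
      (fun e heE _ => mul_nonneg (mul_nonneg (mul_nonneg (hr e heE) (hs e.1)) (hx.1 e heE))
        (rho_nonneg μ e.1 (b e)))) ?_
    refine Finset.sum_le_sum fun e he => ?_
    have hρ0 := rho_nonneg μ e.1 (b e)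
    have hρ1 := rho_le_one μ e.1 (b e)
    have hx0 := hx.1 e he
    have hx1 := x_le_one E x hx he
    have hre := hr e he
    have hse := hs e.1
    nlinarith [mul_le_mul_of_nonneg_left hρ1 (mul_nonneg (mul_nonneg hre hse) hx0),
      mul_le_mul_of_nonneg_right hx1 (mul_nonneg hre hse)]
  gcongr ?_ + ?_
  · exact Finset.sum_le_sum hterm
  · refine Finset.sum_le_sum fun k _ => ?_
    have h1 : lam' k * (m k - spend E μ s r x b k) ≤ |lam' k| * |m k - spend E μ s r x b k| := by
      rw [← abs_mul]; exact le_abs_self _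
    have h2 : |m k - spend E μ s r x b k| ≤ |m k| + ∑ e ∈ E, r e * s e.1 := by
      have := abs_sub (m k) (spend E μ s r x b k)
      have h3 : |spend E μ s r x b k| = spend E μ s r x b k := abs_of_nonneg (hspend0 k)
      calc |m k - spend E μ s r x b k| ≤ |m k| + |spend E μ s r x b k| := abs_sub _ _
        _ ≤ |m k| + ∑ e ∈ E, r e * s e.1 := by rw [h3]; linarith [hspend1 k]
    have h4 : (0:ℝ) ≤ |lam' k| := abs_nonneg _
    nlinarith
end Aux

/-- Theorem 1(ii): Procedure 1 computes a valid subgradient of the dual function. With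
`b*(λ)_ik := (1 − λ_k) r_ik`, `x*(λ)` any maximizer over `S` of the linear function with
coefficients `π(λ)_ik := s_i f_i((1−λ_k)r_ik, (1−λ_k)r_ik)`, and
`g(λ)_k := m_k − Σ_{i ∈ I_k} r_ik s_i x*(λ)_ik ρ_i(b*(λ)_ik)`, we have
`L*(λ') ≥ L*(λ) + ⟨g(λ), λ' − λ⟩` for all `λ' ∈ ℝ^K`. -/
theorem stmt_9 (E : Finset (I × K)) (μ : I → Measure ℝ)
    [∀ i, IsProbabilityMeasure (μ i)]
    (hμ : ∀ i, Integrable (fun t => t) (μ i))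
    (hμ0 : ∀ i, μ i (Set.Iic 0) = 0)
    (s : I → ℝ) (hs : ∀ i, 0 ≤ s i)
    (r : I × K → ℝ) (hr : ∀ e ∈ E, 0 ≤ r e)
    (m : K → ℝ)
    (lam : K → ℝ) (hlam : ∀ k, 0 ≤ lam k ∧ lam k ≤ 1)
    (bstar : (I × K) → ℝ) (hbstar : ∀ e : I × K, bstar e = (1 - lam e.2) * r e)
    (xstar : (I × K) → ℝ) (hx1 : xstar ∈ alloc E)
    (hx2 : ∀ x ∈ alloc E,
      ∑ e ∈ E, (s e.1 * fwin μ e.1 ((1 - lam e.2) * r e) ((1 - lam e.2) * r e)) * x e ≤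
      ∑ e ∈ E, (s e.1 * fwin μ e.1 ((1 - lam e.2) * r e) ((1 - lam e.2) * r e)) * xstar e)
    (g : K → ℝ) (hg : ∀ k : K, g k = m k - spend E μ s r xstar bstar k) :
    ∀ lam' : K → ℝ,
      Lstar E μ s r m lam + ∑ k : K, g k * (lam' k - lam k) ≤ Lstar E μ s r m lam' := by
  intro lam'
  set c : (I × K) → ℝ :=
    fun e => s e.1 * fwin μ e.1 ((1 - lam e.2) * r e) ((1 - lam e.2) * r e) with hc
  have hbpos : ∀ e ∈ E, 0 ≤ bstar e := by
    intro e he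
    rw [hbstar]
    exact mul_nonneg (by linarith [(hlam e.2).2]) (hr e he)
  -- value of Lagrangian at (x, b, lam) is at most Σ c x + Σ lam m
  have hub : ∀ x b : (I × K) → ℝ, x ∈ alloc E →
      Lag E μ s r m x b lam ≤ (∑ e ∈ E, c e * x e) + ∑ k : K, lam k * m k := by
    intro x b hx
    rw [Lag_eq]
    gcongr ?_ + _
    refine Finset.sum_le_sum fun e he => ?_
    have h1 : s e.1 * x e * fwin μ e.1 (r e) (b e)
        - lam e.2 * (r e * s e.1 * x e * rho μ e.1 (b e))
        = s e.1 * x e * fwin μ e.1 ((1 - lam e.2) * r e) (b e) := by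
      linear_combination (s e.1 * x e) * edge_eq μ hμ e.1 (lam e.2) (r e) (b e)
    rw [h1]
    simp only [hc]
    have h2 : fwin μ e.1 ((1 - lam e.2) * r e) (b e)
        ≤ fwin μ e.1 ((1 - lam e.2) * r e) ((1 - lam e.2) * r e) := fwin_le_diag μ hμ _ _ _
    have h3 : 0 ≤ s e.1 * x e := mul_nonneg (hs e.1) (hx.1 e he)
    nlinarith [mul_le_mul_of_nonneg_left h2 h3]
  -- Lagrangian value at (xstar, bstar, lam) equals Σ c xstar + Σ lam m
  have heq : Lag E μ s r m xstar bstar lam = (∑ e ∈ E, c e * xstar e) + ∑ k : K, lam k * m k := by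
    rw [Lag_eq]
    congr 1
    refine Finset.sum_congr rfl fun e he => ?_
    have h1 : s e.1 * xstar e * fwin μ e.1 (r e) (bstar e)
        - lam e.2 * (r e * s e.1 * xstar e * rho μ e.1 (bstar e))
        = s e.1 * xstar e * fwin μ e.1 ((1 - lam e.2) * r e) (bstar e) := by
      linear_combination (s e.1 * xstar e) * edge_eq μ hμ e.1 (lam e.2) (r e) (bstar e)
    rw [h1]
    simp only [hc]
    rw [hbstar e]
    ring
  -- Lstar lam = Lag xstar bstar lam (≤ direction suffices)
  have h1 : Lstar E μ s r m lam ≤ Lag E μ s r m xstar bstar lam := by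
    refine csSup_le ⟨Lag E μ s r m xstar bstar lam, xstar, bstar, hx1, hbpos, rfl⟩ ?_
    rintro v ⟨x, b, hx, hb, rfl⟩
    calc Lag E μ s r m x b lam ≤ (∑ e ∈ E, c e * x e) + ∑ k : K, lam k * m k := hub x b hx
      _ ≤ (∑ e ∈ E, c e * xstar e) + ∑ k : K, lam k * m k := by
          have := hx2 x hx
          simp only [hc] at *
          linarith
      _ = Lag E μ s r m xstar bstar lam := heq.symm
  -- shift identity
  have h2 : Lag E μ s r m xstar bstar lam' =
      Lag E μ s r m xstar bstar lam + ∑ k : K, g k * (lam' k - lam k) := by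
    unfold Lag
    have : ∑ k : K, g k * (lam' k - lam k)
        = ∑ k : K, (lam' k * (m k - spend E μ s r xstar bstar k)
            - lam k * (m k - spend E μ s r xstar bstar k)) := by
      refine Finset.sum_congr rfl fun k _ => ?_
      rw [hg k]; ring
    rw [this, Finset.sum_sub_distrib]
    ring
  have h3 : Lag E μ s r m xstar bstar lam' ≤ Lstar E μ s r m lam' :=
    le_csSup (lag_bdd E μ hμ hμ0 s hs r hr m lam') ⟨xstar, bstar, hx1, hbpos, rfl⟩
  linarith
end
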